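/- Spectral bound for the fractional chromatic number of an operator: let (V, μ) be a probability space and A a nonzero bounded self-adjoint operator on L²(V). Suppose λ₁,...,λₖ ≥ 0 and C₁,...,Cₖ are measurable sets independent for A such that λ₁·1_{C₁} + ... + λₖ·1_{Cₖ} = 1_V (as L² functions). Then λ₁ + ... + λₖ ≥ (⟨A 1_V, 1_V⟩ − m(A))/(−m(A)), provided m(A) < 0. -/

import Mathlib

open MeasureTheory

theorem Lp_coeFn_sum {α E : Type*} [MeasurableSpace α] {μ : Measure α} [NormedAddCommGroup E]
    {p : ENNReal} {ι : Type*} (s : Finset ι) (f : ι → Lp E p μ) :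
    ⇑(∑ i ∈ s, f i) =ᵐ[μ] fun x => ∑ i ∈ s, f i x := by
  classical
  induction s using Finset.induction_on with
  | empty => simpa [Pi.zero_def] using Lp.coeFn_zero E p μ
  | insert _ _ hnot ih =>
    rename_i a s
    rw [Finset.sum_insert hnot]
    filter_upwards [Lp.coeFn_add (f a) (∑ i ∈ s, f i), ih] with x hx hx2
    rw [hx]
    simp only [Pi.add_apply, hx2, Finset.sum_insert hnot]

theorem quad_lower {H : Type*} [NormedAddCommGroup H] [InnerProductSpace ℂ H]
    (A : H →L[ℂ] H) (m : ℝ)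
    (hm : IsGLB {r : ℝ | ∃ f : H, ‖f‖ = 1 ∧ r = (inner ℂ (A f) f : ℂ).re} m)
    (f : H) : m * ‖f‖ ^ 2 ≤ (inner ℂ (A f) f : ℂ).re := by
  rcases eq_or_ne f 0 with rfl | hf
  · simp
  · have hnorm : (0:ℝ) < ‖f‖ := norm_pos_iff.mpr hf
    set c : ℂ := ((‖f‖⁻¹ : ℝ) : ℂ) with hc
    set u : H := c • f with hu
    have hun : ‖u‖ = 1 := by
      simp [hu, hc, norm_smul, abs_of_nonneg (inv_nonneg.mpr (norm_nonneg f)),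
        inv_mul_cancel₀ hnorm.ne']
    have hle := hm.1 ⟨u, hun, rfl⟩
    have hinner : (inner ℂ (A u) u : ℂ) = c * c * inner ℂ (A f) f := by
      rw [hu, A.map_smul, inner_smul_left, inner_smul_right, hc, Complex.conj_ofReal]
      ring
    have hre : (inner ℂ (A u) u : ℂ).re = ‖f‖⁻¹ * ‖f‖⁻¹ * (inner ℂ (A f) f : ℂ).re := by
      rw [hinner, hc, ← Complex.ofReal_mul, Complex.re_ofReal_mul]
    rw [hre] at hle
    have h2 : m * ‖f‖ ^ 2 ≤ (‖f‖⁻¹ * ‖f‖⁻¹ * (inner ℂ (A f) f : ℂ).re) * ‖f‖ ^ 2 :=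
      mul_le_mul_of_nonneg_right hle (by positivity)
    calc m * ‖f‖ ^ 2 ≤ _ := h2
      _ = (inner ℂ (A f) f : ℂ).re := by field_simp

/-- Spectral bound for the fractional chromatic number of an operator:
`λ₁ + ⋯ + λₖ ≥ (⟨A1, 1⟩ - m(A)) / (-m(A))`. -/
theorem fractional_chromatic_bound {V : Type*} [MeasurableSpace V] (μ : Measure V)
    [IsProbabilityMeasure μ]
    (A : Lp ℂ 2 μ →L[ℂ] Lp ℂ 2 μ) (hA0 : A ≠ 0)
    (hsa : ∀ f g : Lp ℂ 2 μ, (inner ℂ (A f) g : ℂ) = inner ℂ f (A g))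
    (one : Lp ℂ 2 μ) (hone : ∀ᵐ x ∂μ, one x = 1)
    (m : ℝ)
    (hm : IsGLB {r : ℝ | ∃ f : Lp ℂ 2 μ, ‖f‖ = 1 ∧ r = (inner ℂ (A f) f : ℂ).re} m)
    (hmneg : m < 0)
    (k : ℕ) (lam : Fin k → ℝ) (hlam : ∀ i, 0 ≤ lam i)
    (C : Fin k → Set V) (hCm : ∀ i, MeasurableSet (C i))
    (hind : ∀ i, ∀ f : Lp ℂ 2 μ, (∀ᵐ x ∂μ, x ∉ C i → f x = 0) →
      (inner ℂ (A f) f : ℂ) = 0)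
    (hsum : ∀ᵐ x ∂μ, ∑ i, lam i * Set.indicator (C i) (fun _ => (1 : ℝ)) x = 1) :
    ((inner ℂ (A one) one : ℂ).re - m) / (-m) ≤ ∑ i, lam i := by
  classical
  set g : Fin k → Lp ℂ 2 μ :=
    fun i => indicatorConstLp 2 (hCm i) (measure_ne_top μ (C i)) (1 : ℂ) with hg
  set s : ℝ := ∑ i, lam i with hs
  set Q : ℝ := (inner ℂ (A one) one : ℂ).re with hQ
  set μi : Fin k → ℝ := fun i => (μ (C i)).toReal with hμi
  -- basic facts about μi
  have hμi_nonneg : ∀ i, 0 ≤ μi i := fun i => ENNReal.toReal_nonneg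
  have hμi_le_one : ∀ i, μi i ≤ 1 := by
    intro i
    have h := measure_mono (μ := μ) (Set.subset_univ (C i))
    simpa [hμi] using ENNReal.toReal_mono (by simp) h
  -- one = ∑ λ_i • g_i in Lp
  have hgae : ∀ i, ⇑(g i) =ᵐ[μ] (C i).indicator fun _ => (1:ℂ) := fun i =>
    indicatorConstLp_coeFn
  have hone_eq : one = ∑ i, (lam i : ℂ) • g i := by
    apply Lp.ext
    have hsmul : ∀ᵐ x ∂μ, ∀ i, ((lam i : ℂ) • g i) x = (lam i : ℂ) * (C i).indicator (fun _ => (1:ℂ)) x := by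
      rw [MeasureTheory.ae_all_iff]
      intro i
      filter_upwards [Lp.coeFn_smul (lam i : ℂ) (g i), hgae i] with x h1 h2
      rw [h1]
      simp [h2]
    filter_upwards [hone, hsum, Lp_coeFn_sum Finset.univ (fun i => (lam i : ℂ) • g i), hsmul]
      with x h1 h2 h3 h4
    rw [h1, h3]
    have hx : ∑ i, ((lam i : ℂ) • g i) x
        = ((∑ i, lam i * (C i).indicator (fun _ => (1:ℝ)) x : ℝ) : ℂ) := by
      push_cast
      refine Finset.sum_congr rfl fun i _ => ?_
      rw [h4 i]
      by_cases hxc : x ∈ C i <;> simp [Set.indicator, hxc]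
    rw [hx, h2, Complex.ofReal_one]
  -- quadratic form vanishes on each g i
  have hq0 : ∀ i, (inner ℂ (A (g i)) (g i) : ℂ) = 0 := by
    intro i
    apply hind i
    filter_upwards [hgae i] with x hx hxn
    rw [hx]
    simp [Set.indicator, hxn]
  -- ∑ λ_i μ_i = 1
  have hsum1 : ∑ i, lam i * μi i = 1 := by
    have hint_i : ∀ i : Fin k, Integrable (fun x => lam i * (C i).indicator (fun _ => (1:ℝ)) x) μ :=
      fun i => ((integrable_const (1:ℝ)).indicator (hCm i)).const_mul (lam i)
    have h1 : ∫ x, (∑ i, lam i * (C i).indicator (fun _ => (1:ℝ)) x) ∂μ = 1 := by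
      rw [integral_congr_ae hsum]
      simp
    rw [integral_finset_sum _ (fun i _ => hint_i i)] at h1
    rw [← h1]
    refine Finset.sum_congr rfl fun i _ => ?_
    rw [integral_const_mul, integral_indicator_const (1:ℝ) (hCm i)]
    simp [hμi]
    exact Or.inl rfl
  have hs1 : 1 ≤ s := by
    rw [← hsum1, hs]
    refine Finset.sum_le_sum fun i _ => ?_
    calc lam i * μi i ≤ lam i * 1 := by
          exact mul_le_mul_of_nonneg_left (hμi_le_one i) (hlam i)
      _ = lam i := mul_one _
  have hs0 : (0:ℝ) < s := by linarith
  -- norms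
  have hgnorm : ∀ i, ‖g i‖ ^ 2 = μi i := by
    intro i
    rw [hg]
    rw [norm_indicatorConstLp (by norm_num) (by norm_num)]
    simp only [norm_one, one_mul]
    rw [ENNReal.toReal_ofNat, ← Real.sqrt_eq_rpow]; exact Real.sq_sqrt measureReal_nonneg
  have hginner : ∀ i, (inner ℂ (g i) one : ℂ) = ((μi i : ℝ) : ℂ) := by
    intro i
    rw [MeasureTheory.L2.inner_def]
    have : ∀ᵐ x ∂μ, (inner ℂ (g i x) (one x) : ℂ) = (C i).indicator (fun _ => (1:ℂ)) x := by
      filter_upwards [hgae i, hone] with x h1 h2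
      rw [RCLike.inner_apply, h1, h2, one_mul]
      by_cases hxc : x ∈ C i <;> simp [Set.indicator, hxc]
    rw [integral_congr_ae this, integral_indicator_const (1:ℂ) (hCm i)]
    simp [hμi]
    rfl
  have honesq : ‖one‖ ^ 2 = 1 := by
    have h1 : (inner ℂ one one : ℂ) = 1 := by
      rw [MeasureTheory.L2.inner_def]
      have : ∀ᵐ x ∂μ, (inner ℂ (one x) (one x) : ℂ) = 1 := by
        filter_upwards [hone] with x h2
        rw [RCLike.inner_apply, h2]
        simp
      rw [integral_congr_ae this]
      simp
    rw [← inner_self_eq_norm_sq (𝕜 := ℂ) one, h1]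
    simp
  -- B i
  set B : Fin k → ℝ := fun i => (inner ℂ (A (g i)) one : ℂ).re with hB
  have hBQ : ∑ i, lam i * B i = Q := by
    have h1 : A one = ∑ i, (lam i : ℂ) • A (g i) := by
      rw [hone_eq, map_sum]
      simp only [map_smul]
    have h2 : (inner ℂ (A one) one : ℂ) = ∑ i, (lam i : ℂ) * inner ℂ (A (g i)) one := by
      rw [h1, sum_inner]
      refine Finset.sum_congr rfl fun i _ => ?_
      rw [inner_smul_left, Complex.conj_ofReal]
    rw [hQ, h2, Complex.re_sum]
    refine Finset.sum_congr rfl fun i _ => ?_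
    rw [Complex.re_ofReal_mul]
  -- key inequality per i
  have key : ∀ i, m * (s^2 * μi i - 2*s*μi i + 1) ≤ -2*s*(B i) + Q := by
    intro i
    set w : Lp ℂ 2 μ := ((s:ℝ):ℂ) • g i - one with hw
    have hnw : ‖w‖ ^ 2 = s^2 * μi i - 2*s*μi i + 1 := by
      rw [hw, norm_sub_sq (𝕜 := ℂ), inner_smul_left, Complex.conj_ofReal, norm_smul]
      rw [hginner i, honesq]
      have : ‖((s:ℝ):ℂ)‖ = s := by
        rw [Complex.norm_real, Real.norm_eq_abs, abs_of_pos hs0]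
      rw [this, mul_pow, hgnorm i, ← Complex.ofReal_mul]
      simp only [Complex.ofReal_re, RCLike.re_to_complex]
      ring
    have hiw : (inner ℂ (A w) w : ℂ).re = -2*s*(B i) + Q := by
      have hAw : A w = ((s:ℝ):ℂ) • A (g i) - A one := by
        rw [hw, map_sub, A.map_smul]
      have hsym : (inner ℂ (A one) (g i) : ℂ) = starRingEnd ℂ (inner ℂ (A (g i)) one) := by
        rw [hsa one (g i), ← inner_conj_symm]
      have hexp : (inner ℂ (A w) w : ℂ)
          = -(((s:ℝ):ℂ) * inner ℂ (A (g i)) one)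
            - ((s:ℝ):ℂ) * starRingEnd ℂ (inner ℂ (A (g i)) one) + inner ℂ (A one) one := by
        rw [hw, hAw, inner_sub_left, inner_sub_right, inner_sub_right,
          inner_smul_left, inner_smul_left, inner_smul_right, inner_smul_right,
          hq0 i, hsym, Complex.conj_ofReal]
        ring
      rw [hexp]
      simp only [Complex.add_re, Complex.sub_re, Complex.neg_re, Complex.re_ofReal_mul,
        Complex.conj_re]
      ring
    have := quad_lower A m hm w
    rw [hnw, hiw] at this
    exact this
  -- sum up
  have hkey2 : ∑ i, lam i * (m * (s^2 * μi i - 2*s*μi i + 1)) ≤ ∑ i, lam i * (-2*s*(B i) + Q) :=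
    Finset.sum_le_sum fun i _ => mul_le_mul_of_nonneg_left (key i) (hlam i)
  have hL : ∑ i, lam i * (m * (s^2 * μi i - 2*s*μi i + 1)) = m * (s^2 - s) := by
    calc ∑ i, lam i * (m * (s^2 * μi i - 2*s*μi i + 1))
        = ∑ i, (m * (s^2 - 2*s) * (lam i * μi i) + m * lam i) :=
          Finset.sum_congr rfl fun i _ => by ring
      _ = m * (s^2 - 2*s) * (∑ i, lam i * μi i) + m * ∑ i, lam i := by
          rw [Finset.sum_add_distrib, ← Finset.mul_sum, ← Finset.mul_sum]
      _ = m * (s^2 - s) := by rw [hsum1, ← hs]; ring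
  have hR : ∑ i, lam i * (-2*s*(B i) + Q) = -s * Q := by
    calc ∑ i, lam i * (-2*s*(B i) + Q)
        = ∑ i, ((-2*s) * (lam i * B i) + Q * lam i) :=
          Finset.sum_congr rfl fun i _ => by ring
      _ = (-2*s) * (∑ i, lam i * B i) + Q * ∑ i, lam i := by
          rw [Finset.sum_add_distrib, ← Finset.mul_sum, ← Finset.mul_sum]
      _ = -s * Q := by rw [hBQ, ← hs]; ring
  rw [hL, hR] at hkey2
  rw [div_le_iff₀ (by linarith : (0:ℝ) < -m)]
  nlinarith [hkey2, hs0, hs1, mul_pos hs0 hs0]
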